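/- arXiv:0907.1006 — 2 statements merged into one kernel-verified Lean document; each statement's English description precedes it below -/
import Mathlib

section
/- Let N ≥ 2, q > 1, let S be a relatively open Lipschitz subdomain of the unit sphere S^{N−1}, and let C_S = {x ∈ ℝ^N ∖ {0} : x/|x| ∈ S} be the open cone with vertex 0 and opening S. Let 𝒰 be the class of nonnegative solutions u of −Δu + u^q = 0 in C_S which extend continuously to C̄_S ∖ {0} and vanish on ∂C_S ∖ {0}. If U ∈ 𝒰 is maximal in 𝒰 (i.e., u ≤ U for every u ∈ 𝒰), then U(x) = a^{2/(q−1)} U(a x) for every a > 0 and x ∈ C_S; equivalently, U(x) = |x|^{−2/(q−1)} U(x/|x|) for all x ∈ C_S. (Homogeneity of the maximal solution in a cone, identity (5.18) in the proof of Theorem 5.5.) -/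
open MeasureTheory Metric Set Filter

/-- The Laplacian of a function on `ℝ^N`, as the sum of the second derivatives
in the coordinate directions. -/
noncomputable def lap {N : ℕ} (f : EuclideanSpace ℝ (Fin N) → ℝ)
    (x : EuclideanSpace ℝ (Fin N)) : ℝ :=
  ∑ i : Fin N,
    fderiv ℝ (fun y => fderiv ℝ f y (EuclideanSpace.single i 1)) x (EuclideanSpace.single i 1)

/-- The first coordinate `ξ₁` of a point of `ℝ^N`. -/
noncomputable def coordHead {N : ℕ} (ξ : EuclideanSpace ℝ (Fin N)) : ℝ :=
  if h : 0 < N then ξ ⟨0, h⟩ else 0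

/-- The remaining coordinates `ξ'` of a point of `ℝ^N`, as a point of `ℝ^{N-1}`. -/
noncomputable def coordTail {N : ℕ} (ξ : EuclideanSpace ℝ (Fin N)) :
    EuclideanSpace ℝ (Fin (N - 1)) :=
  (EuclideanSpace.equiv (Fin (N - 1)) ℝ).symm fun i =>
    ξ ⟨(i : ℕ) + 1, by have h := i.2; omega⟩

/-- A local Lipschitz graph representation of the boundary of `Ω` near the boundary point `y`:
`ψ` is a Lipschitz function with constant `lam` and `T` is an isometry of `ℝ^N` taking `y` to `0`,
such that in the cylinder `{|ξ'| < r₀, |ξ₁| < r₀}` (coordinates `ξ = T x`), the boundary of `Ω`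
is the graph `{ξ₁ = ψ(ξ')}` and `Ω` is the subgraph `{ξ₁ < ψ(ξ')}`. -/
def GraphRep {N : ℕ} (r₀ lam : ℝ) (Ω : Set (EuclideanSpace ℝ (Fin N)))
    (y : EuclideanSpace ℝ (Fin N)) (ψ : EuclideanSpace ℝ (Fin (N - 1)) → ℝ)
    (T : EuclideanSpace ℝ (Fin N) ≃ᵢ EuclideanSpace ℝ (Fin N)) : Prop :=
  (∀ a b, |ψ a - ψ b| ≤ lam * ‖a - b‖) ∧ T y = 0 ∧
    ∀ x : EuclideanSpace ℝ (Fin N),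
      ‖coordTail (T x)‖ < r₀ → |coordHead (T x)| < r₀ →
        ((x ∈ Ω ↔ coordHead (T x) < ψ (coordTail (T x))) ∧
          (x ∈ frontier Ω ↔ coordHead (T x) = ψ (coordTail (T x))))

/-- `Ω` is a bounded Lipschitz domain in `ℝ^N` with Lipschitz character `(r₀, lam)`. -/
def IsLipschitzDomain {N : ℕ} (r₀ lam : ℝ) (Ω : Set (EuclideanSpace ℝ (Fin N))) : Prop :=
  IsOpen Ω ∧ Bornology.IsBounded Ω ∧ Ω.Nonempty ∧
    ∀ y ∈ frontier Ω, ∃ ψ T, GraphRep r₀ lam Ω y ψ T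

/-- Test function supported in `Ω`. -/
def IsTest {N : ℕ} (Ω : Set (EuclideanSpace ℝ (Fin N)))
    (φ : EuclideanSpace ℝ (Fin N) → ℝ) : Prop :=
  ContDiff ℝ (⊤ : ℕ∞) φ ∧ HasCompactSupport φ ∧ tsupport φ ⊆ Ω

/-- `u` is a (distributional) solution of `-Δu + g(u) = 0` in `Ω`. -/
def IsSolution {N : ℕ} (Ω : Set (EuclideanSpace ℝ (Fin N))) (g : ℝ → ℝ)
    (u : EuclideanSpace ℝ (Fin N) → ℝ) : Prop :=
  LocallyIntegrableOn u Ω ∧ LocallyIntegrableOn (fun x => g (u x)) Ω ∧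
    ∀ φ, IsTest Ω φ → (∫ x in Ω, (-(u x) * lap φ x + g (u x) * φ x)) = 0

/-- `u` is a (distributional) supersolution of `-Δu + g(u) = 0` in `Ω`. -/
def IsSupersolution {N : ℕ} (Ω : Set (EuclideanSpace ℝ (Fin N))) (g : ℝ → ℝ)
    (u : EuclideanSpace ℝ (Fin N) → ℝ) : Prop :=
  LocallyIntegrableOn u Ω ∧ LocallyIntegrableOn (fun x => g (u x)) Ω ∧
    ∀ φ, IsTest Ω φ → (∀ x, 0 ≤ φ x) →
      0 ≤ ∫ x in Ω, (-(u x) * lap φ x + g (u x) * φ x)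

/-- `u` is a (distributional) subsolution of `-Δu + g(u) = 0` in `Ω`. -/
def IsSubsolution {N : ℕ} (Ω : Set (EuclideanSpace ℝ (Fin N))) (g : ℝ → ℝ)
    (u : EuclideanSpace ℝ (Fin N) → ℝ) : Prop :=
  LocallyIntegrableOn u Ω ∧ LocallyIntegrableOn (fun x => g (u x)) Ω ∧
    ∀ φ, IsTest Ω φ → (∀ x, 0 ≤ φ x) →
      (∫ x in Ω, (-(u x) * lap φ x + g (u x) * φ x)) ≤ 0

/-- The primitive `G(s) = ∫₀^s g(t) dt`. -/
noncomputable def Gprim (g : ℝ → ℝ) (s : ℝ) : ℝ := ∫ t in (0 : ℝ)..s, g t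

/-- The Keller–Osserman condition: `G(s) > 0` for all large `s`, and
`∫_a^∞ G(s)^{-1/2} ds < ∞` for some `a > 0`. -/
def KellerOsserman (g : ℝ → ℝ) : Prop :=
  (∃ s₀ : ℝ, ∀ s, s₀ ≤ s → 0 < Gprim g s) ∧
    ∃ a : ℝ, 0 < a ∧ IntegrableOn (fun s => Gprim g s ^ (-(1 / 2) : ℝ)) (Set.Ioi a)

/-- The open cone with vertex `0` and opening `S ⊆ S^{N-1}`. -/
def coneOf {N : ℕ} (S : Set (EuclideanSpace ℝ (Fin N))) : Set (EuclideanSpace ℝ (Fin N)) :=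
  {x | x ≠ 0 ∧ ‖x‖⁻¹ • x ∈ S}

/-- `u` is a (distributional) solution of `-Δu + u^q = 0` in `D`. -/
def IsPowSolutionOn {N : ℕ} (D : Set (EuclideanSpace ℝ (Fin N))) (q : ℝ)
    (u : EuclideanSpace ℝ (Fin N) → ℝ) : Prop :=
  LocallyIntegrableOn u D ∧ LocallyIntegrableOn (fun x => u x ^ q) D ∧
    ∀ φ, IsTest D φ → (∫ x in D, (-(u x) * lap φ x + u x ^ q * φ x)) = 0

/-- The class `𝒰` of nonnegative solutions of `-Δu + u^q = 0` in the cone `C_S`, extending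
continuously to `C̄_S ∖ {0}` and vanishing on `∂C_S ∖ {0}`. -/
def InUClass {N : ℕ} (S : Set (EuclideanSpace ℝ (Fin N))) (q : ℝ)
    (u : EuclideanSpace ℝ (Fin N) → ℝ) : Prop :=
  IsPowSolutionOn (coneOf S) q u ∧ (∀ x ∈ coneOf S, 0 ≤ u x) ∧
    ContinuousOn u (closure (coneOf S) \ {0}) ∧ ∀ x ∈ frontier (coneOf S) \ {0}, u x = 0

section AuxLemmas

open Pointwise

variable {N : ℕ}

lemma fderiv_comp_smul' (g : EuclideanSpace ℝ (Fin N) → ℝ) (hg : Differentiable ℝ g)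
    (c : ℝ) (x v : EuclideanSpace ℝ (Fin N)) :
    fderiv ℝ (fun y => g (c • y)) x v = c * fderiv ℝ g (c • x) v := by
  set L : EuclideanSpace ℝ (Fin N) →L[ℝ] EuclideanSpace ℝ (Fin N) :=
    c • ContinuousLinearMap.id ℝ (EuclideanSpace ℝ (Fin N)) with hL
  have h1 : (fun y => g (c • y)) = g ∘ L := rfl
  rw [h1, fderiv_comp x (hg.differentiableAt) (L.differentiableAt), L.fderiv]
  simp [L, mul_comm]

lemma lap_comp_smul (φ : EuclideanSpace ℝ (Fin N) → ℝ) (hφ : ContDiff ℝ (⊤ : ℕ∞) φ)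
    (c : ℝ) (x : EuclideanSpace ℝ (Fin N)) :
    lap (fun y => φ (c • y)) x = c ^ 2 * lap φ (c • x) := by
  have hφ' : Differentiable ℝ φ := hφ.differentiable (by simp)
  have hf1 : ContDiff ℝ (⊤ : ℕ∞) (fderiv ℝ φ) := hφ.fderiv_right (by exact_mod_cast le_top)
  unfold lap
  rw [Finset.mul_sum]
  refine Finset.sum_congr rfl fun i _ => ?_
  set v := EuclideanSpace.single i (1:ℝ) with hv
  set g : EuclideanSpace ℝ (Fin N) → ℝ := fun z => fderiv ℝ φ z v with hg
  have hgd : Differentiable ℝ g := (hf1.differentiable (by simp)).clm_apply (differentiable_const v)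
  have step1 : (fun y => fderiv ℝ (fun z => φ (c • z)) y v) = fun y => c * g (c • y) := by
    funext y
    exact fderiv_comp_smul' φ hφ' c y v
  rw [step1]
  have hdiff : DifferentiableAt ℝ (fun y => g (c • y)) x :=
    (hgd.comp (differentiable_id.const_smul c)).differentiableAt
  rw [fderiv_const_mul hdiff c]
  simp only [ContinuousLinearMap.smul_apply, smul_eq_mul]
  rw [fderiv_comp_smul' g hgd c x v]
  ring

variable {S : Set (EuclideanSpace ℝ (Fin N))}

lemma cone_smul_mem {a : ℝ} (ha : 0 < a) (x : EuclideanSpace ℝ (Fin N)) :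
    a • x ∈ coneOf S ↔ x ∈ coneOf S := by
  unfold coneOf
  by_cases hx : x = 0
  · simp [hx]
  · have hax : a • x ≠ 0 := smul_ne_zero ha.ne' hx
    have hnorm : ‖a • x‖⁻¹ • a • x = ‖x‖⁻¹ • x := by
      rw [norm_smul, smul_smul, Real.norm_eq_abs, abs_of_pos ha]
      congr 1
      have hxn : ‖x‖ ≠ 0 := norm_ne_zero_iff.2 hx
      field_simp
    simp [hx, hax, hnorm]

lemma isOpen_cone (hSopen : ∃ V, IsOpen V ∧ S = V ∩ sphere (0 : EuclideanSpace ℝ (Fin N)) 1) :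
    IsOpen (coneOf S) := by
  obtain ⟨V, hV, rfl⟩ := hSopen
  have heq : coneOf (V ∩ sphere (0 : EuclideanSpace ℝ (Fin N)) 1) =
      {(0 : EuclideanSpace ℝ (Fin N))}ᶜ ∩ (fun x => ‖x‖⁻¹ • x) ⁻¹' V := by
    ext x
    simp only [coneOf, mem_setOf_eq, mem_inter_iff, mem_compl_iff, mem_singleton_iff,
      mem_preimage]
    constructor
    · rintro ⟨hx, hV', _⟩; exact ⟨hx, hV'⟩
    · rintro ⟨hx, hV'⟩
      refine ⟨hx, hV', ?_⟩
      have hxn : ‖x‖ ≠ 0 := norm_ne_zero_iff.2 hx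
      simp [norm_smul, abs_of_nonneg (inv_nonneg.2 (norm_nonneg x)), inv_mul_cancel₀ hxn]
  rw [heq]
  refine ContinuousOn.isOpen_inter_preimage ?_ isOpen_compl_singleton hV
  exact ContinuousOn.smul ((continuous_norm.continuousOn).inv₀
    (fun x hx => norm_ne_zero_iff.2 hx)) continuousOn_id

lemma cone_smul_set {a : ℝ} (ha : 0 < a) : a • coneOf S = coneOf S := by
  ext x
  rw [mem_smul_set_iff_inv_smul_mem₀ ha.ne']
  exact cone_smul_mem (inv_pos.2 ha) x

lemma closure_cone_smul_mem {a : ℝ} (ha : 0 < a) {x : EuclideanSpace ℝ (Fin N)}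
    (hx : x ∈ closure (coneOf S)) : a • x ∈ closure (coneOf S) := by
  have h : a • closure (coneOf S) = closure (coneOf S) := by
    rw [← closure_smul₀' ha.ne', cone_smul_set ha]
  rw [← h]
  exact smul_mem_smul_set hx

lemma scaled_mem {q : ℝ} (hq : 1 < q)
    (hSopen : ∃ V, IsOpen V ∧ S = V ∩ sphere (0 : EuclideanSpace ℝ (Fin N)) 1)
    {U : EuclideanSpace ℝ (Fin N) → ℝ} (hU : InUClass S q U) {a : ℝ} (ha : 0 < a) :
    InUClass S q (fun x => a ^ (2 / (q - 1)) * U (a • x)) := by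
  set p : ℝ := 2 / (q - 1) with hp
  set C : Set (EuclideanSpace ℝ (Fin N)) := coneOf S with hC
  have hCopen : IsOpen C := isOpen_cone hSopen
  have hCmeas : MeasurableSet C := hCopen.measurableSet
  obtain ⟨⟨hUloc, hUqloc, hUsol⟩, hUnn, hUcont, hUzero⟩ := hU
  have hCsub : C ⊆ closure C \ {0} := fun x hx => ⟨subset_closure hx, hx.1⟩
  have hUcontC : ContinuousOn U C := hUcont.mono hCsub
  have hmaps : MapsTo (fun x => a • x) (closure C \ {0}) (closure C \ {0}) := by
    rintro x ⟨hx1, hx2⟩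
    exact ⟨closure_cone_smul_mem ha hx1, smul_ne_zero ha.ne' (by simpa using hx2)⟩
  have hvcontFull : ContinuousOn (fun x => a ^ p * U (a • x)) (closure C \ {0}) :=
    continuousOn_const.mul (hUcont.comp (continuous_const_smul a).continuousOn hmaps)
  have hvcont : ContinuousOn (fun x => a ^ p * U (a • x)) C := hvcontFull.mono hCsub
  have hvnn : ∀ x ∈ C, 0 ≤ a ^ p * U (a • x) := by
    intro x hx
    have hax : a • x ∈ C := (cone_smul_mem ha x).2 hx
    exact mul_nonneg (Real.rpow_nonneg ha.le p) (hUnn _ hax)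
  have hvqcont : ContinuousOn (fun x => (a ^ p * U (a • x)) ^ q) C :=
    hvcont.rpow_const (fun x _ => Or.inr (by linarith))
  refine ⟨⟨hvcont.locallyIntegrableOn hCmeas, hvqcont.locallyIntegrableOn hCmeas, ?_⟩,
    hvnn, hvcontFull, ?_⟩
  · -- the distributional identity
    intro φ hφ
    obtain ⟨hφs, hφc, hφsupp⟩ := hφ
    set χ : EuclideanSpace ℝ (Fin N) → ℝ := fun y => φ (a⁻¹ • y) with hχ
    have hχs : ContDiff ℝ (⊤ : ℕ∞) χ := hφs.comp (contDiff_id.const_smul a⁻¹)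
    have hχc : HasCompactSupport χ := hφc.comp_smul (inv_ne_zero ha.ne')
    have hχsupp : tsupport χ ⊆ C := by
      have hsupp : Function.support χ = a • Function.support φ := by
        ext y
        simp [hχ, mem_smul_set_iff_inv_smul_mem₀ ha.ne', Function.mem_support]
      rw [tsupport, hsupp, closure_smul₀' ha.ne']
      calc a • closure (Function.support φ) ⊆ a • C := smul_set_mono hφsupp
        _ = C := cone_smul_set ha
    have hUeq := hUsol χ ⟨hχs, hχc, hχsupp⟩
    set g : EuclideanSpace ℝ (Fin N) → ℝ :=
      fun y => -(U y) * lap χ y + U y ^ q * χ y with hgdef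
    have hlapφ : ∀ x, lap φ x = a ^ 2 * lap χ (a • x) := by
      intro x
      have h := lap_comp_smul φ hφs a⁻¹ (a • x)
      rw [inv_smul_smul₀ ha.ne'] at h
      rw [show lap χ (a • x) = lap (fun y => φ (a⁻¹ • y)) (a • x) from rfl, h]
      have ha2 : (a : ℝ) ≠ 0 := ha.ne'
      field_simp
    have hpq : p * q = p + 2 := by
      have hq1 : q - 1 ≠ 0 := by linarith
      rw [hp]
      field_simp [hp]
      ring
    have hEq : EqOn (fun x => -(a ^ p * U (a • x)) * lap φ x + (a ^ p * U (a • x)) ^ q * φ x)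
        (fun x => a ^ (p * q) * g (a • x)) C := by
      intro x hx
      have hax : a • x ∈ C := (cone_smul_mem ha x).2 hx
      have hU0 : 0 ≤ U (a • x) := hUnn _ hax
      have hχax : χ (a • x) = φ x := by
        simp [hχ, inv_smul_smul₀ ha.ne']
      have h1 : (a ^ p * U (a • x)) ^ q = a ^ (p * q) * U (a • x) ^ q := by
        rw [Real.mul_rpow (Real.rpow_nonneg ha.le p) hU0, ← Real.rpow_mul ha.le]
      have h3 : a ^ (p * q) = a ^ p * a ^ (2 : ℕ) := by
        rw [hpq, Real.rpow_add ha]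
        congr 1
        rw [show ((2 : ℝ)) = ((2 : ℕ) : ℝ) by norm_num, Real.rpow_natCast]
      simp only
      rw [hlapφ x, h1, hgdef]
      simp only [hχax]
      rw [h3]
      ring
    rw [setIntegral_congr_fun hCmeas hEq, integral_const_mul _ _]
    have hzero : ∫ x in C, g (a • x) = 0 := by
      have h1 : (fun x => C.indicator g (a • x)) = C.indicator (fun x => g (a • x)) := by
        funext y
        by_cases hy : y ∈ C
        · rw [indicator_of_mem hy, indicator_of_mem ((cone_smul_mem ha y).2 hy)]
        · rw [indicator_of_notMem hy,
            indicator_of_notMem (fun h => hy ((cone_smul_mem ha y).1 h))]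
      calc ∫ x in C, g (a • x)
          = ∫ x, C.indicator (fun x => g (a • x)) x := (integral_indicator hCmeas).symm
        _ = ∫ x, C.indicator g (a • x) := by rw [h1]
        _ = |(a ^ (Module.finrank ℝ (EuclideanSpace ℝ (Fin N))))⁻¹| •
              ∫ x, C.indicator g x := Measure.integral_comp_smul volume (C.indicator g) a
        _ = 0 := by rw [integral_indicator hCmeas, hUeq, smul_zero]
    rw [hzero, mul_zero]
  · -- vanishing on frontier minus origin
    rintro x ⟨hx1, hx2⟩
    simp only [mem_singleton_iff] at hx2
    rw [hCopen.frontier_eq] at hx1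
    show a ^ p * U (a • x) = 0
    have haxfr : a • x ∈ frontier C \ {0} := by
      rw [hCopen.frontier_eq]
      refine ⟨⟨closure_cone_smul_mem ha hx1.1, fun h => hx1.2 ((cone_smul_mem ha x).1 h)⟩,
        by simp [smul_ne_zero ha.ne' hx2]⟩
    rw [hUzero _ haxfr, mul_zero]

end AuxLemmas

/-- Identity (5.18) in the proof of Theorem 5.5: homogeneity of the maximal solution of
`-Δu + u^q = 0` in the cone `C_S` over a relatively open Lipschitz spherical domain `S`
(here the Lipschitz regularity of `S` is expressed by a local Lipschitz graph representation
of the boundary of `C_S` away from the vertex):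
`U(x) = a^{2/(q-1)} U(ax)` for all `a > 0`, equivalently
`U(x) = |x|^{-2/(q-1)} U(x/|x|)`. -/
theorem statement6 (N : ℕ) (hN : 2 ≤ N) (q : ℝ) (hq : 1 < q)
    (S : Set (EuclideanSpace ℝ (Fin N)))
    (hSsub : S ⊆ sphere (0 : EuclideanSpace ℝ (Fin N)) 1)
    (hSopen : ∃ V, IsOpen V ∧ S = V ∩ sphere (0 : EuclideanSpace ℝ (Fin N)) 1)
    (hSconn : IsConnected S)
    (hSlip : ∀ y ∈ frontier (coneOf S), y ≠ 0 →
      ∃ r₁ lam₁ : ℝ, 0 < r₁ ∧ 0 < lam₁ ∧ ∃ ψ T, GraphRep r₁ lam₁ (coneOf S) y ψ T)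
    (U : EuclideanSpace ℝ (Fin N) → ℝ) (hU : InUClass S q U)
    (hmax : ∀ u, InUClass S q u → ∀ x ∈ coneOf S, u x ≤ U x) :
    (∀ a : ℝ, 0 < a → ∀ x ∈ coneOf S, U x = a ^ (2 / (q - 1)) * U (a • x)) ∧
    ∀ x ∈ coneOf S, U x = ‖x‖ ^ (-(2 / (q - 1))) * U (‖x‖⁻¹ • x) := by
  set p : ℝ := 2 / (q - 1) with hp
  have part1 : ∀ a : ℝ, 0 < a → ∀ x ∈ coneOf S, U x = a ^ (2 / (q - 1)) * U (a • x) := by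
    intro a ha x hx
    have h1 := hmax _ (scaled_mem hq hSopen hU ha) x hx
    have h2 := hmax _ (scaled_mem hq hSopen hU (inv_pos.2 ha)) (a • x)
      ((cone_smul_mem ha x).2 hx)
    rw [inv_smul_smul₀ ha.ne'] at h2
    rw [Real.inv_rpow ha.le] at h2
    have hap : 0 < a ^ (2 / (q - 1)) := Real.rpow_pos_of_pos ha _
    have h3 := mul_le_mul_of_nonneg_left h2 hap.le
    rw [← mul_assoc, mul_inv_cancel₀ hap.ne', one_mul] at h3
    linarith
  refine ⟨part1, ?_⟩
  intro x hx
  have hx0 : x ≠ 0 := hx.1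
  have hn : 0 < ‖x‖ := norm_pos_iff.2 hx0
  have h := part1 ‖x‖⁻¹ (inv_pos.2 hn) x hx
  rw [Real.inv_rpow (norm_nonneg x), ← Real.rpow_neg (norm_nonneg x)] at h
  exact h
end

section
/- Let N ≥ 2, let k ∈ {1, …, N−1} be an integer, let κ > 0, q > 1 and R > 0. Then the integral ∫₀^R ∫₀^R (s² + t²)^{−q(N−2+2κ)/2} s^{(q+1)κ + k − 1} t^{N−k−1} dt ds is finite if and only if q < (κ + N)/(κ + N − 2). (Reduced form of Proposition 6.2: the criterion for admissibility of a Dirac mass on the edge of a k-dihedron, identifying the critical exponent q_c = (κ₊ + N)/(κ₊ + N − 2).) -/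
open MeasureTheory Set ENNReal

private lemma rpow_meas' (p : ℝ) : Measurable fun s : ℝ => s ^ p := by fun_prop

private lemma lint_rpow_lt_top_iff' {p R : ℝ} (hR : 0 < R) :
    (∫⁻ s in Ioo (0:ℝ) R, ENNReal.ofReal (s ^ p)) < ⊤ ↔ -1 < p := by
  have hnn : 0 ≤ᵐ[volume.restrict (Ioo (0:ℝ) R)] fun s : ℝ => s ^ p :=
    (ae_restrict_iff' measurableSet_Ioo).2 (ae_of_all _ fun x hx => Real.rpow_nonneg hx.1.le p)
  rw [← hasFiniteIntegral_iff_ofReal hnn]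
  constructor
  · intro h
    exact (intervalIntegral.integrableOn_Ioo_rpow_iff hR).1 ⟨(rpow_meas' p).aestronglyMeasurable, h⟩
  · intro h
    exact ((intervalIntegral.integrableOn_Ioo_rpow_iff hR).2 h).2

private lemma lint_const_rpow_top' {p C R : ℝ} (hR : 0 < R) (hC : 0 < C) (hp : p ≤ -1) :
    (∫⁻ s in Ioo (0:ℝ) R, ENNReal.ofReal (C * s ^ p)) = ⊤ := by
  have h0 : ∀ s : ℝ, ENNReal.ofReal (C * s ^ p) = ENNReal.ofReal C * ENNReal.ofReal (s ^ p) :=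
    fun s => ENNReal.ofReal_mul hC.le
  simp_rw [h0]
  rw [lintegral_const_mul _ ((rpow_meas' p).ennreal_ofReal)]
  have h1 : (∫⁻ s in Ioo (0:ℝ) R, ENNReal.ofReal (s ^ p)) = ⊤ := by
    by_contra h
    have := (lint_rpow_lt_top_iff' hR).1 (lt_top_iff_ne_top.2 h)
    linarith
  rw [h1, ENNReal.mul_top ((ENNReal.ofReal_pos.2 hC).ne')]

set_option maxHeartbeats 1000000 in
/-- Reduced form of Proposition 6.2: the integral
`∫₀^R ∫₀^R (s² + t²)^{-q(N-2+2κ)/2} s^{(q+1)κ+k-1} t^{N-k-1} dt ds`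
is finite if and only if `q < (κ + N)/(κ + N - 2)`; this identifies the critical
exponent `q_c` for admissibility of a Dirac mass on the edge of a `k`-dihedron. -/
theorem statement7 (N k : ℕ) (hN : 2 ≤ N) (hk1 : 1 ≤ k) (hkN : k ≤ N - 1)
    (κ q R : ℝ) (hκ : 0 < κ) (hq : 1 < q) (hR : 0 < R) :
    (∫⁻ s in Ioo (0 : ℝ) R, ∫⁻ t in Ioo (0 : ℝ) R,
        ENNReal.ofReal ((s ^ 2 + t ^ 2) ^ (-(q * ((N : ℝ) - 2 + 2 * κ)) / 2) *
          s ^ ((q + 1) * κ + (k : ℝ) - 1) * t ^ ((N : ℝ) - (k : ℝ) - 1))) < ⊤ ↔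
      q < (κ + N) / (κ + N - 2) := by
  have hN2 : (2:ℝ) ≤ (N:ℝ) := by exact_mod_cast hN
  have hk1' : (1:ℝ) ≤ (k:ℝ) := by exact_mod_cast hk1
  have hkN' : (k:ℝ) + 1 ≤ (N:ℝ) := by exact_mod_cast (by omega : k + 1 ≤ N)
  simp only [neg_div]
  set a : ℝ := q * ((N : ℝ) - 2 + 2 * κ) / 2 with ha_def
  set b : ℝ := (q + 1) * κ + (k : ℝ) - 1 with hb_def
  set c : ℝ := (N : ℝ) - (k : ℝ) - 1 with hc_def
  have ha : 0 < a := by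
    rw [ha_def]
    exact div_pos (mul_pos (by linarith) (by linarith)) (by norm_num)
  have h2a : 0 < 2 * a := by linarith
  have hb1 : -1 < b := by
    rw [hb_def]
    nlinarith [mul_pos (show (0:ℝ) < q + 1 by linarith) hκ]
  have hc0 : 0 ≤ c := by rw [hc_def]; linarith
  have hcrit : (q < (κ + N) / (κ + N - 2)) ↔ 2 * a < b + c + 2 := by
    rw [lt_div_iff₀ (by linarith : (0:ℝ) < κ + ↑N - 2), ha_def, hb_def, hc_def]
    constructor <;> intro h <;> nlinarith
  rw [hcrit]
  constructor
  · -- finiteness implies exponent condition (contrapositive)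
    intro hfin
    by_contra hcon
    push_neg at hcon
    set C0 : ℝ := 2 ^ (-a) / 2 ^ c / 2 with hC0_def
    have hC0 : 0 < C0 := by
      rw [hC0_def]
      have h1 : (0:ℝ) < 2 ^ (-a) := Real.rpow_pos_of_pos (by norm_num) _
      have h2 : (0:ℝ) < 2 ^ c := Real.rpow_pos_of_pos (by norm_num) _
      positivity
    have hp : b + c + 1 - 2 * a ≤ -1 := by linarith
    have hge : (⊤ : ℝ≥0∞) ≤ ∫⁻ s in Ioo (0 : ℝ) R, ∫⁻ t in Ioo (0 : ℝ) R,
        ENNReal.ofReal ((s ^ 2 + t ^ 2) ^ (-a) * s ^ b * t ^ c) := by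
      rw [← lint_const_rpow_top' hR hC0 hp]
      apply setLIntegral_mono' measurableSet_Ioo
      intro s hs
      obtain ⟨hs0, hsR⟩ := hs
      have hsub : Ioo (s/2) s ⊆ Ioo (0:ℝ) R := by
        intro t ht
        exact ⟨by linarith [ht.1], by linarith [ht.2]⟩
      have heq : (2*s^2) ^ (-a) * s ^ b * (s/2) ^ c * (s - s/2)
          = C0 * s ^ (b + c + 1 - 2*a) := by
        have e1 : (2*s^2) ^ (-a) = 2 ^ (-a) * (s ^ (-a) * s ^ (-a)) := by
          rw [show 2*s^2 = 2*(s*s) by ring, Real.mul_rpow (by norm_num) (by positivity),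
            Real.mul_rpow hs0.le hs0.le]
        have e2 : (s/2) ^ c = s ^ c / 2 ^ c := Real.div_rpow hs0.le (by norm_num) c
        have e3 : s - s/2 = s ^ (1:ℝ) / 2 := by rw [Real.rpow_one]; ring
        rw [e1, e2, e3, hC0_def]
        have e4 : s ^ (-a) * s ^ (-a) * s ^ b * s ^ c * s ^ (1:ℝ)
            = s ^ (b + c + 1 - 2*a) := by
          rw [← Real.rpow_add hs0, ← Real.rpow_add hs0, ← Real.rpow_add hs0,
            ← Real.rpow_add hs0]
          congr 1; ring
        calc 2 ^ (-a) * (s ^ (-a) * s ^ (-a)) * s ^ b * (s ^ c / 2 ^ c) * (s ^ (1:ℝ) / 2)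
            = 2 ^ (-a) / 2 ^ c / 2 * (s ^ (-a) * s ^ (-a) * s ^ b * s ^ c * s ^ (1:ℝ)) := by
              ring
          _ = 2 ^ (-a) / 2 ^ c / 2 * s ^ (b + c + 1 - 2*a) := by rw [e4]
      calc ENNReal.ofReal (C0 * s ^ (b + c + 1 - 2*a))
          = ENNReal.ofReal ((2*s^2) ^ (-a) * s ^ b * (s/2) ^ c * (s - s/2)) := by rw [heq]
        _ = ENNReal.ofReal ((2*s^2) ^ (-a) * s ^ b * (s/2) ^ c)
              * ENNReal.ofReal (s - s/2) := by
            rw [ENNReal.ofReal_mul]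
            have h1 : (0:ℝ) ≤ (2*s^2) ^ (-a) := Real.rpow_nonneg (by positivity) _
            have h2 : (0:ℝ) ≤ s ^ b := Real.rpow_nonneg hs0.le _
            have h3 : (0:ℝ) ≤ (s/2) ^ c := Real.rpow_nonneg (by positivity) _
            positivity
        _ = ∫⁻ _t in Ioo (s/2) s,
              ENNReal.ofReal ((2*s^2) ^ (-a) * s ^ b * (s/2) ^ c) := by
            rw [setLIntegral_const, Real.volume_Ioo]
        _ ≤ ∫⁻ t in Ioo (s/2) s,
              ENNReal.ofReal ((s ^ 2 + t ^ 2) ^ (-a) * s ^ b * t ^ c) := by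
            apply setLIntegral_mono' measurableSet_Ioo
            intro t ht
            apply ENNReal.ofReal_le_ofReal
            have ht0 : 0 < t := by linarith [ht.1]
            have hb1' : (2*s^2) ^ (-a) ≤ (s ^ 2 + t ^ 2) ^ (-a) := by
              apply Real.rpow_le_rpow_of_nonpos (by positivity)
              · nlinarith [ht.2, ht0]
              · linarith
            have hb2' : (s/2) ^ c ≤ t ^ c :=
              Real.rpow_le_rpow (by positivity) ht.1.le hc0
            have h2 : (0:ℝ) ≤ s ^ b := Real.rpow_nonneg hs0.le _
            have h3 : (0:ℝ) ≤ (s/2) ^ c := Real.rpow_nonneg (by positivity) _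
            have h4 : (0:ℝ) ≤ (s ^ 2 + t ^ 2) ^ (-a) * s ^ b :=
              mul_nonneg (Real.rpow_nonneg (by positivity) _) h2
            exact mul_le_mul (mul_le_mul_of_nonneg_right hb1' h2) hb2' h3 h4
        _ ≤ ∫⁻ t in Ioo (0:ℝ) R,
              ENNReal.ofReal ((s ^ 2 + t ^ 2) ^ (-a) * s ^ b * t ^ c) :=
            lintegral_mono' (Measure.restrict_mono hsub le_rfl) le_rfl
    exact absurd hfin (not_lt.2 hge)
  · -- exponent condition implies finiteness
    intro hlt
    have hLU : max 0 (1 - (c+1)/(2*a)) < min 1 ((b+1)/(2*a)) := by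
      apply max_lt
      · exact lt_min one_pos (div_pos (by linarith) h2a)
      · apply lt_min
        · have : 0 < (c+1)/(2*a) := div_pos (by linarith) h2a
          linarith
        · rw [sub_lt_iff_lt_add, ← add_div]
          exact (one_lt_div h2a).2 (by linarith)
    set θ : ℝ := (max 0 (1 - (c+1)/(2*a)) + min 1 ((b+1)/(2*a))) / 2 with hθ_def
    have hθL : max 0 (1 - (c+1)/(2*a)) < θ := by rw [hθ_def]; linarith
    have hθU : θ < min 1 ((b+1)/(2*a)) := by rw [hθ_def]; linarith
    have hθ0 : 0 ≤ θ := le_trans (le_max_left _ _) hθL.le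
    have hθ1 : θ ≤ 1 := hθU.le.trans (min_le_left _ _)
    have hB : -1 < b - 2*a*θ := by
      have h1 : θ < (b+1)/(2*a) := lt_of_lt_of_le hθU (min_le_right _ _)
      rw [lt_div_iff₀ h2a, mul_comm] at h1
      linarith
    have hC : -1 < c - 2*a*(1-θ) := by
      have h2 : 1 - (c+1)/(2*a) < θ := (le_max_right _ _).trans_lt hθL
      have h3 : 1 - θ < (c+1)/(2*a) := by linarith
      rw [lt_div_iff₀ h2a, mul_comm] at h3
      linarith
    set B : ℝ := b - 2*a*θ with hB_def
    set C : ℝ := c - 2*a*(1-θ) with hC_def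
    have key : ∀ s ∈ Ioo (0:ℝ) R, ∀ t ∈ Ioo (0:ℝ) R,
        (s ^ 2 + t ^ 2) ^ (-a) * s ^ b * t ^ c ≤ s ^ B * t ^ C := by
      intro s hs t ht
      have hs0 : 0 < s := hs.1
      have ht0 : 0 < t := ht.1
      have hu : 0 < s ^ 2 + t ^ 2 := by positivity
      have e : (s ^ 2 + t ^ 2) ^ (-a)
          = (s ^ 2 + t ^ 2) ^ (-(a*θ)) * (s ^ 2 + t ^ 2) ^ (-(a*(1-θ))) := by
        rw [← Real.rpow_add hu]; congr 1; ring
      have d1 : (s ^ 2 + t ^ 2) ^ (-(a*θ)) ≤ s ^ (-(2*a*θ)) := by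
        have h1 : (s ^ 2 + t ^ 2) ^ (-(a*θ)) ≤ (s*s) ^ (-(a*θ)) :=
          Real.rpow_le_rpow_of_nonpos (by positivity) (by nlinarith [sq_nonneg t])
            (neg_nonpos.2 (mul_nonneg ha.le hθ0))
        calc (s ^ 2 + t ^ 2) ^ (-(a*θ)) ≤ (s*s) ^ (-(a*θ)) := h1
          _ = s ^ (-(2*a*θ)) := by
            rw [Real.mul_rpow hs0.le hs0.le, ← Real.rpow_add hs0]; congr 1; ring
      have d2 : (s ^ 2 + t ^ 2) ^ (-(a*(1-θ))) ≤ t ^ (-(2*a*(1-θ))) := by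
        have h1 : (s ^ 2 + t ^ 2) ^ (-(a*(1-θ))) ≤ (t*t) ^ (-(a*(1-θ))) :=
          Real.rpow_le_rpow_of_nonpos (by positivity) (by nlinarith [sq_nonneg s])
            (neg_nonpos.2 (mul_nonneg ha.le (by linarith)))
        calc (s ^ 2 + t ^ 2) ^ (-(a*(1-θ))) ≤ (t*t) ^ (-(a*(1-θ))) := h1
          _ = t ^ (-(2*a*(1-θ))) := by
            rw [Real.mul_rpow ht0.le ht0.le, ← Real.rpow_add ht0]; congr 1; ring
      calc (s ^ 2 + t ^ 2) ^ (-a) * s ^ b * t ^ c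
          = ((s ^ 2 + t ^ 2) ^ (-(a*θ)) * s ^ b)
            * ((s ^ 2 + t ^ 2) ^ (-(a*(1-θ))) * t ^ c) := by rw [e]; ring
        _ ≤ (s ^ (-(2*a*θ)) * s ^ b) * (t ^ (-(2*a*(1-θ))) * t ^ c) := by
            apply mul_le_mul
            · exact mul_le_mul_of_nonneg_right d1 (Real.rpow_nonneg hs0.le _)
            · exact mul_le_mul_of_nonneg_right d2 (Real.rpow_nonneg ht0.le _)
            · exact mul_nonneg (Real.rpow_nonneg hu.le _) (Real.rpow_nonneg ht0.le _)
            · exact mul_nonneg (Real.rpow_nonneg hs0.le _) (Real.rpow_nonneg hs0.le _)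
        _ = s ^ B * t ^ C := by
            rw [← Real.rpow_add hs0, ← Real.rpow_add ht0, hB_def, hC_def]
            congr 1 <;> congr 1 <;> ring
    set J : ℝ≥0∞ := ∫⁻ t in Ioo (0:ℝ) R, ENNReal.ofReal (t ^ C) with hJ_def
    have hJ : J < ⊤ := (lint_rpow_lt_top_iff' hR).2 hC
    have hI : (∫⁻ s in Ioo (0:ℝ) R, ENNReal.ofReal (s ^ B)) < ⊤ :=
      (lint_rpow_lt_top_iff' hR).2 hB
    calc (∫⁻ s in Ioo (0 : ℝ) R, ∫⁻ t in Ioo (0 : ℝ) R,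
            ENNReal.ofReal ((s ^ 2 + t ^ 2) ^ (-a) * s ^ b * t ^ c))
        ≤ ∫⁻ s in Ioo (0 : ℝ) R, ENNReal.ofReal (s ^ B) * J := by
          apply setLIntegral_mono' measurableSet_Ioo
          intro s hs
          have step1 : (∫⁻ t in Ioo (0 : ℝ) R,
              ENNReal.ofReal ((s ^ 2 + t ^ 2) ^ (-a) * s ^ b * t ^ c))
              ≤ ∫⁻ t in Ioo (0 : ℝ) R, ENNReal.ofReal (s ^ B * t ^ C) := by
            apply setLIntegral_mono' measurableSet_Ioo
            intro t ht
            exact ENNReal.ofReal_le_ofReal (key s hs t ht)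
          have step2 : (∫⁻ t in Ioo (0 : ℝ) R, ENNReal.ofReal (s ^ B * t ^ C))
              = ENNReal.ofReal (s ^ B) * J := by
            have h0 : ∀ t : ℝ, ENNReal.ofReal (s ^ B * t ^ C)
                = ENNReal.ofReal (s ^ B) * ENNReal.ofReal (t ^ C) :=
              fun t => ENNReal.ofReal_mul (Real.rpow_nonneg hs.1.le B)
            simp_rw [h0]
            exact lintegral_const_mul _ ((rpow_meas' C).ennreal_ofReal)
          rw [← step2]
          exact step1
      _ = (∫⁻ s in Ioo (0:ℝ) R, ENNReal.ofReal (s ^ B)) * J :=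
          lintegral_mul_const _ ((rpow_meas' B).ennreal_ofReal)
      _ < ⊤ := ENNReal.mul_lt_top hI hJ
end
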